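/- Let {V(s) : s ≥ 0} be a locally a.s. bounded C-semigroup on a complete RN module X with generator (A, D(A)). Then for every z ∈ D(A) and every l > 0, the supremum ⋁_{s∈(0,l]} ‖C A_s z‖ belongs to L⁰₊(F), where A_s = (V(s) - C)/s; indeed ‖C A_s z‖ ≤ (⋁_{t∈[0,2s]} ‖V(t)‖)·‖CAz‖ for every s > 0. -/

import Mathlib

open MeasureTheory Filter Set
noncomputable section

/-- A random normed module (RN module) over ℝ with base `(Ω, F, P)`:
an `L⁰(F,ℝ)`-module `X` together with an `L⁰`-norm. The `L⁰(F,ℝ)`-scalar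
multiplication is bundled as the field `smul`. -/
structure RNModuleStr {Ω : Type*} [MeasurableSpace Ω] (P : Measure Ω)
    (X : Type*) [AddCommGroup X] where
  smul : (Ω →ₘ[P] ℝ) → X → X
  nrm : X → Ω →ₘ[P] ℝ
  one_smul' : ∀ x, smul 1 x = x
  mul_smul' : ∀ ξ η x, smul (ξ * η) x = smul ξ (smul η x)
  smul_add' : ∀ ξ x y, smul ξ (x + y) = smul ξ x + smul ξ y
  add_smul' : ∀ ξ η x, smul (ξ + η) x = smul ξ x + smul η x
  nrm_nonneg : ∀ x, 0 ≤ nrm x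
  nrm_smul : ∀ ξ x, nrm (smul ξ x) = |ξ| * nrm x
  nrm_add_le : ∀ x y, nrm (x + y) ≤ nrm x + nrm y
  nrm_eq_zero : ∀ x, nrm x = 0 → x = 0

namespace RNModuleStr

variable {Ω : Type*} [MeasurableSpace Ω] {P : Measure Ω} {X : Type*} [AddCommGroup X]

/-- Scalar multiplication by a real constant (viewed as a constant random variable). -/
def rsmul (M : RNModuleStr P X) (c : ℝ) (x : X) : X :=
  M.smul (AEEqFun.const Ω c) x

/-- Convergence in the `(ε,λ)`-topology of an RN module, i.e. convergence in
probability of the `L⁰`-norms of the differences, along an arbitrary filter. -/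
def TendstoRN (M : RNModuleStr P X) {ι : Type*} (f : ι → X) (l : Filter ι) (x : X) : Prop :=
  ∀ ε : ℝ, 0 < ε → Tendsto (fun i => P {ω : Ω | ε ≤ M.nrm (f i - x) ω}) l (nhds 0)

/-- Sequential continuity of a map between RN modules; in the metrizable
`(ε,λ)`-topology this is equivalent to continuity. -/
def RNContinuousMap {Y : Type*} [AddCommGroup Y] (M : RNModuleStr P X)
    (N : RNModuleStr P Y) (T : X → Y) : Prop :=
  ∀ (u : ℕ → X) (x : X), M.TendstoRN u atTop x → N.TendstoRN (fun n => T (u n)) atTop (T x)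

/-- `T : X → Y` is a module homomorphism of `L⁰`-modules. -/
def IsModuleHom {Y : Type*} [AddCommGroup Y] (M : RNModuleStr P X)
    (N : RNModuleStr P Y) (T : X → Y) : Prop :=
  (∀ x y : X, T (x + y) = T x + T y) ∧ ∀ (ξ : Ω →ₘ[P] ℝ) (x : X), T (M.smul ξ x) = N.smul ξ (T x)

/-- `T` is almost surely bounded: `‖Tz‖ ≤ η ‖z‖` for some `η ∈ L⁰₊`. -/
def ASBounded {Y : Type*} [AddCommGroup Y] (M : RNModuleStr P X)
    (N : RNModuleStr P Y) (T : X → Y) : Prop :=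
  ∃ η : Ω →ₘ[P] ℝ, 0 ≤ η ∧ ∀ x : X, N.nrm (T x) ≤ η * M.nrm x

/-- Riemann sum over the uniform partition of `[a,b]` into `n` pieces. -/
def rsum (M : RNModuleStr P X) (f : ℝ → X) (a b : ℝ) (n : ℕ) : X :=
  ∑ i ∈ Finset.range n, M.rsmul ((b - a) / n) (f (a + (b - a) * i / n))

/-- `y` is the Riemann integral `∫ₐᵇ f(u) du` in the complete RN module `X`
(limit in the `(ε,λ)`-topology of the uniform Riemann sums). -/
def IsIntegral (M : RNModuleStr P X) (f : ℝ → X) (a b : ℝ) (y : X) : Prop :=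
  M.TendstoRN (fun n => M.rsum f a b n) atTop y

/-- The family `{V(s) : s ≥ 0}` is locally a.s. bounded:
`⋁_{s∈[0,l]} ‖V(s)‖ ∈ L⁰₊(F)` for every `l > 0`. -/
def LocASBounded (M : RNModuleStr P X) (V : ℝ → X → X) : Prop :=
  ∀ l : ℝ, 0 < l → ∃ η : Ω →ₘ[P] ℝ, 0 ≤ η ∧
    ∀ s ∈ Icc (0:ℝ) l, ∀ x : X, M.nrm (V s x) ≤ η * M.nrm x

/-- `{V(s) : s ≥ 0}` is a `C`-semigroup on the RN module `X`. -/
structure IsCSemigroup (M : RNModuleStr P X) (V : ℝ → X → X) (C : X → X) : Prop where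
  C_hom : M.IsModuleHom M C
  C_bdd : ASBounded M M C
  C_inj : Function.Injective C
  V_hom : ∀ s : ℝ, 0 ≤ s → M.IsModuleHom M (V s)
  V_bdd : ∀ s : ℝ, 0 ≤ s → ASBounded M M (V s)
  strong_cont : ∀ (z : X) (t : ℝ), 0 ≤ t →
    M.TendstoRN (fun s => V s z) (nhdsWithin t (Ici 0)) (V t z)
  V_zero : V 0 = C
  C_V : ∀ s t : ℝ, 0 ≤ s → 0 ≤ t → ∀ z : X, C (V (s + t) z) = V s (V t z)

/-- `(A, DA)` is the generator of the `C`-semigroup `{V(s) : s ≥ 0}`: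
`DA = {z : lim_{s↓0} (V(s)z - Cz)/s exists and lies in R(C)}` and
`Az = C⁻¹ lim_{s↓0} (V(s)z - Cz)/s`. -/
structure IsGenerator (M : RNModuleStr P X) (V : ℝ → X → X) (C : X → X)
    (DA : Set X) (A : X → X) : Prop where
  mem_iff : ∀ z : X, z ∈ DA ↔ ∃ w : X,
    M.TendstoRN (fun s => M.rsmul s⁻¹ (V s z - C z)) (nhdsWithin 0 (Ioi 0)) (C w)
  spec : ∀ z ∈ DA,
    M.TendstoRN (fun s => M.rsmul s⁻¹ (V s z - C z)) (nhdsWithin 0 (Ioi 0)) (C (A z))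

/-- `{V(s) : s ≥ 0}` is a mild `C`-existence family for the module homomorphism
`A` with domain `DA`. -/
structure IsMildCExistenceFamily (M : RNModuleStr P X) (V : ℝ → X → X) (C : X → X)
    (DA : Set X) (A : X → X) : Prop where
  V_hom : ∀ s : ℝ, 0 ≤ s → M.IsModuleHom M (V s)
  locBdd : M.LocASBounded V
  strong_cont : ∀ (z : X) (t : ℝ), 0 ≤ t →
    M.TendstoRN (fun s => V s z) (nhdsWithin t (Ici 0)) (V t z)
  integral_mem : ∀ (z : X) (s : ℝ), 0 ≤ s → ∃ y : X,
    M.IsIntegral (fun u => V u z) 0 s y ∧ y ∈ DA ∧ A y = V s z - C z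

/-- `A` (with domain `DA`) is a closed module homomorphism: its graph is closed
in the `(ε,λ)`-topology. -/
def IsClosedOperator (M : RNModuleStr P X) (DA : Set X) (A : X → X) : Prop :=
  ∀ (u : ℕ → X) (z y : X), (∀ n, u n ∈ DA) →
    M.TendstoRN u atTop z → M.TendstoRN (fun n => A (u n)) atTop y →
    z ∈ DA ∧ A z = y

end RNModuleStr

open RNModuleStr


section Helpers
variable {Ω : Type*} [MeasurableSpace Ω] {P : Measure Ω} {X : Type*} [AddCommGroup X]

namespace RNModuleStr

lemma smul_zero_right (M : RNModuleStr P X) (ξ : Ω →ₘ[P] ℝ) : M.smul ξ (0 : X) = 0 := by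
  have h := M.smul_add' ξ 0 0
  rw [add_zero] at h
  have h2 : M.smul ξ 0 + 0 = M.smul ξ 0 + M.smul ξ 0 := by rw [add_zero, ← h]
  exact (add_left_cancel h2).symm

lemma zero_smul_left (M : RNModuleStr P X) (x : X) : M.smul 0 x = 0 := by
  have h := M.add_smul' 0 0 x
  rw [add_zero] at h
  have h2 : M.smul 0 x + 0 = M.smul 0 x + M.smul 0 x := by rw [add_zero, ← h]
  exact (add_left_cancel h2).symm

lemma const_neg_one : (AEEqFun.const Ω (-1 : ℝ) : Ω →ₘ[P] ℝ) = -1 := by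
  apply AEEqFun.ext
  filter_upwards [AEEqFun.coeFn_const Ω (-1 : ℝ) (μ := P),
    AEEqFun.coeFn_neg (1 : Ω →ₘ[P] ℝ), AEEqFun.coeFn_one (β := ℝ) (μ := P)] with ω e1 e2 e3
  simp only [e1, e2, Pi.neg_apply, e3, Pi.one_apply, Function.const_apply]

lemma neg_one_rsmul (M : RNModuleStr P X) (x : X) : M.rsmul (-1) x = -x := by
  have h1 : M.smul ((-1) + 1) x = M.smul (-1) x + M.smul 1 x := M.add_smul' _ _ x
  rw [neg_add_cancel, M.zero_smul_left, M.one_smul'] at h1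
  have h2 : M.rsmul (-1) x = M.smul (-1) x := by
    show M.smul (AEEqFun.const Ω (-1 : ℝ)) x = _
    rw [const_neg_one]
  rw [h2]
  have h3 : M.smul (-1) x + x = 0 := by rw [← h1]
  exact eq_neg_of_add_eq_zero_left h3

lemma nrm_zero (M : RNModuleStr P X) : M.nrm (0 : X) = 0 := by
  have h : M.nrm (0 : X) = |(0 : Ω →ₘ[P] ℝ)| * M.nrm (0 : X) := by
    conv_lhs => rw [← M.zero_smul_left 0]
    exact M.nrm_smul 0 0
  rw [h]
  apply AEEqFun.ext
  filter_upwards [AEEqFun.coeFn_mul (|(0 : Ω →ₘ[P] ℝ)|) (M.nrm 0),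
    AEEqFun.coeFn_abs (0 : Ω →ₘ[P] ℝ), AEEqFun.coeFn_zero (β := ℝ) (μ := P)] with ω e1 e2 e3
  simp only [e1, Pi.mul_apply, e2, e3, Pi.zero_apply, abs_zero, zero_mul]

/-- Sum inequality for the `L⁰` norm, pointwise a.e. -/
lemma nrm_sum_ae (M : RNModuleStr P X) (f : ℕ → X) (n : ℕ) :
    ∀ᵐ ω ∂P, M.nrm (∑ i ∈ Finset.range n, f i) ω ≤ ∑ i ∈ Finset.range n, M.nrm (f i) ω := by
  induction n with
  | zero =>
    simp only [Finset.range_zero, Finset.sum_empty]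
    rw [M.nrm_zero]
    filter_upwards [AEEqFun.coeFn_zero (β := ℝ) (μ := P)] with ω e
    simp [e]
  | succ n ih =>
    have tri := AEEqFun.coeFn_le.2 (M.nrm_add_le (∑ i ∈ Finset.range n, f i) (f n))
    filter_upwards [ih, tri,
      AEEqFun.coeFn_add (M.nrm (∑ i ∈ Finset.range n, f i)) (M.nrm (f n))] with ω h1 h2 h3
    rw [Finset.sum_range_succ, Finset.sum_range_succ]
    calc M.nrm (∑ i ∈ Finset.range n, f i + f n) ω
        ≤ (M.nrm (∑ i ∈ Finset.range n, f i) + M.nrm (f n)) ω := h2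
      _ = M.nrm (∑ i ∈ Finset.range n, f i) ω + M.nrm (f n) ω := h3
      _ ≤ (∑ i ∈ Finset.range n, M.nrm (f i) ω) + M.nrm (f n) ω := by linarith

end RNModuleStr
end Helpers
section Part2
variable {Ω : Type*} [MeasurableSpace Ω] {P : Measure Ω} {X : Type*} [AddCommGroup X]

/-- From `0 ≤ h` in `L⁰` to the pointwise a.e. statement. -/
lemma nonneg_ae {h : Ω →ₘ[P] ℝ} (hh : 0 ≤ h) : ∀ᵐ ω ∂P, 0 ≤ h ω := by
  filter_upwards [AEEqFun.coeFn_le.2 hh, AEEqFun.coeFn_zero (β := ℝ) (μ := P)] with ω e1 e2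
  rw [e2] at e1; simpa using e1

namespace RNModuleStr

/-- Telescoping identity: `C(V(s)z - Cz) = ∑_{i<n} V(i·s/n)(V(s/n)z - Cz)`. -/
lemma telescope (M : RNModuleStr P X) {V : ℝ → X → X} {C : X → X}
    (hV : IsCSemigroup M V C) (z : X) {s : ℝ} (hs : 0 < s) (n : ℕ) (hn : 0 < n) :
    C (V s z - C z) = ∑ i ∈ Finset.range n, V ((i : ℝ) * (s / n)) (V (s / n) z - C z) := by
  set h : ℝ := s / n with hh_def
  have hnR : (0:ℝ) < n := by exact_mod_cast hn
  have hh : 0 < h := div_pos hs hnR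
  let φC : X →+ X := AddMonoidHom.mk' C hV.C_hom.1
  have term : ∀ i ∈ Finset.range n,
      V ((i : ℝ) * h) (V h z - C z)
        = C (V (((i+1 : ℕ) : ℝ) * h) z) - C (V ((i : ℝ) * h) z) := by
    intro i _
    have hi : (0:ℝ) ≤ (i : ℝ) * h := mul_nonneg (Nat.cast_nonneg i) hh.le
    let φV : X →+ X := AddMonoidHom.mk' (V ((i : ℝ) * h)) (hV.V_hom _ hi).1
    have e1 : C (V ((i : ℝ) * h + h) z) = V ((i : ℝ) * h) (V h z) := hV.C_V _ _ hi hh.le z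
    have e2 : C (V ((i : ℝ) * h + 0) z) = V ((i : ℝ) * h) (V 0 z) := hV.C_V _ 0 hi le_rfl z
    rw [add_zero, hV.V_zero] at e2
    have hsub : V ((i : ℝ) * h) (V h z - C z)
        = V ((i : ℝ) * h) (V h z) - V ((i : ℝ) * h) (C z) := map_sub φV _ _
    rw [hsub, ← e1, ← e2]
    have harg : ((i+1 : ℕ) : ℝ) * h = (i : ℝ) * h + h := by push_cast; ring
    rw [harg]
  rw [Finset.sum_congr rfl term, Finset.sum_range_sub (fun i => C (V ((i : ℝ) * h) z)) n]
  have hnh : (n : ℝ) * h = s := by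
    rw [hh_def]; field_simp
  rw [Nat.cast_zero, zero_mul, hnh, hV.V_zero]
  exact map_sub φC _ _

end RNModuleStr

/-- The greatest lower bound of a set of a.s. bounds is itself an a.s. bound. -/
lemma glb_mul {Ω : Type*} [MeasurableSpace Ω] {P : Measure Ω}
    {c f g : Ω →ₘ[P] ℝ} {S : Set (Ω →ₘ[P] ℝ)}
    (hf : 0 ≤ f) (hS0 : ∀ η ∈ S, 0 ≤ η) (hSc : ∀ η ∈ S, c ≤ η * f)
    (hne : S.Nonempty) (hg : IsGLB S g) : c ≤ g * f := by
  classical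
  obtain ⟨η₀, hη₀⟩ := hne
  have hg0 : 0 ≤ g := hg.2 fun η hη => hS0 η hη
  set θf : Ω → ℝ := fun ω => if c ω ≤ g ω * f ω then g ω else c ω / f ω with hθf_def
  have hmeas : Measurable θf := Measurable.ite
    (measurableSet_le c.stronglyMeasurable.measurable
      (g.stronglyMeasurable.measurable.mul f.stronglyMeasurable.measurable))
    g.stronglyMeasurable.measurable
    (c.stronglyMeasurable.measurable.div f.stronglyMeasurable.measurable)
  set θ : Ω →ₘ[P] ℝ := AEEqFun.mk θf hmeas.aestronglyMeasurable with hθ_def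
  have hθle : θ ∈ lowerBounds S := by
    intro η hη
    rw [← AEEqFun.coeFn_le]
    filter_upwards [AEEqFun.coeFn_le.2 (hSc η hη), AEEqFun.coeFn_le.2 (hg.1 hη),
      nonneg_ae hf, nonneg_ae hg0, nonneg_ae (hS0 η hη),
      AEEqFun.coeFn_mk θf hmeas.aestronglyMeasurable,
      AEEqFun.coeFn_mul η f] with ω e1 e2 e3 e4 e5 e6 e7
    rw [e6]
    rw [e7] at e1
    simp only [Pi.mul_apply] at e1
    by_cases hc : c ω ≤ g ω * f ω
    · simp only [hθf_def, hc, if_pos]; exact e2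
    · simp only [hθf_def, hc, if_neg, not_false_iff]
      push_neg at hc
      have hcpos : 0 < c ω := lt_of_le_of_lt (mul_nonneg e4 e3) hc
      have hfpos : 0 < f ω := by
        rcases eq_or_lt_of_le e3 with hf0 | hf0
        · exfalso; rw [← hf0, mul_zero] at e1; exact absurd e1 (not_le.2 hcpos)
        · exact hf0
      rw [div_le_iff₀ hfpos]
      linarith [e1]
  have hθg : θ ≤ g := hg.2 hθle
  rw [← AEEqFun.coeFn_le]
  filter_upwards [AEEqFun.coeFn_le.2 (hSc η₀ hη₀), AEEqFun.coeFn_le.2 hθg,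
    nonneg_ae hf, nonneg_ae hg0, AEEqFun.coeFn_mk θf hmeas.aestronglyMeasurable,
    AEEqFun.coeFn_mul η₀ f, AEEqFun.coeFn_mul g f] with ω e1 e2 e3 e4 e5 e6 e7
  rw [e7]
  simp only [Pi.mul_apply]
  by_contra hc
  push_neg at hc
  rw [e6] at e1; simp only [Pi.mul_apply] at e1
  have hcpos : 0 < c ω := lt_of_le_of_lt (mul_nonneg e4 e3) hc
  have hfpos : 0 < f ω := by
    rcases eq_or_lt_of_le e3 with hf0 | hf0
    · exfalso; rw [← hf0, mul_zero] at e1; exact absurd e1 (not_le.2 hcpos)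
    · exact hf0
  have hθω : θf ω ≤ g ω := by rw [← e5]; exact e2
  have : θf ω = c ω / f ω := by
    simp only [hθf_def, if_neg (not_le.2 hc)]
  rw [this, div_le_iff₀ hfpos] at hθω
  linarith

end Part2
section Part3
variable {Ω : Type*} [MeasurableSpace Ω] {P : Measure Ω}

/-- Passing an a.s. inequality through a limit in probability. -/
lemma le_mul_lim [IsProbabilityMeasure P] {a W b : Ω →ₘ[P] ℝ} {r : ℕ → Ω →ₘ[P] ℝ}
    (hW : 0 ≤ W) (hab : ∀ n, ∀ᵐ ω ∂P, a ω ≤ W ω * (b ω + (r n) ω))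
    (hlim : ∀ ε : ℝ, 0 < ε → Tendsto (fun n => P {ω | ε ≤ (r n) ω}) atTop (nhds 0)) :
    a ≤ W * b := by
  have hWae : ∀ᵐ ω ∂P, 0 ≤ W ω := nonneg_ae hW
  have main : ∀ ε : ℝ, 0 < ε → P {ω | ε ≤ a ω - W ω * b ω} = 0 := by
    intro ε hε
    have step1 : ∀ δ : ℝ, 0 < δ →
        P {ω | ε ≤ a ω - W ω * b ω} ≤ P {ω | ε / δ ≤ W ω} := by
      intro δ hδ
      have bound : ∀ n, P {ω | ε ≤ a ω - W ω * b ω}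
          ≤ P {ω | δ ≤ (r n) ω} + P {ω | ε / δ ≤ W ω} := by
        intro n
        set Bad : Set Ω := {ω | ¬ (a ω ≤ W ω * (b ω + (r n) ω) ∧ 0 ≤ W ω)} with hBad
        have hnull : P Bad = 0 := by
          have := (hab n).and hWae
          rw [MeasureTheory.ae_iff] at this
          exact this
        have hsub : {ω | ε ≤ a ω - W ω * b ω} ⊆
            ({ω | δ ≤ (r n) ω} ∪ {ω | ε / δ ≤ W ω}) ∪ Bad := by
          intro ω hω
          simp only [Set.mem_setOf_eq] at hω
          by_cases hgood : a ω ≤ W ω * (b ω + (r n) ω) ∧ 0 ≤ W ω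
          · left
            obtain ⟨h1, h2⟩ := hgood
            by_contra hcon
            simp only [Set.mem_union, Set.mem_setOf_eq, not_or, not_le] at hcon
            obtain ⟨hr1, hr2⟩ := hcon
            have k1 : W ω * (r n) ω ≤ W ω * δ :=
              mul_le_mul_of_nonneg_left hr1.le h2
            have k2 : W ω * δ < (ε / δ) * δ := mul_lt_mul_of_pos_right hr2 hδ
            have k3 : (ε / δ) * δ = ε := div_mul_cancel₀ ε hδ.ne'
            nlinarith
          · right; exact hgood
        calc P {ω | ε ≤ a ω - W ω * b ω}
            ≤ P (({ω | δ ≤ (r n) ω} ∪ {ω | ε / δ ≤ W ω}) ∪ Bad) := measure_mono hsub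
          _ ≤ P ({ω | δ ≤ (r n) ω} ∪ {ω | ε / δ ≤ W ω}) + P Bad := measure_union_le _ _
          _ = P ({ω | δ ≤ (r n) ω} ∪ {ω | ε / δ ≤ W ω}) := by rw [hnull, add_zero]
          _ ≤ P {ω | δ ≤ (r n) ω} + P {ω | ε / δ ≤ W ω} := measure_union_le _ _
      have htend : Tendsto (fun n => P {ω | δ ≤ (r n) ω} + P {ω | ε / δ ≤ W ω}) atTop
          (nhds (0 + P {ω | ε / δ ≤ W ω})) := (hlim δ hδ).add tendsto_const_nhds
      rw [zero_add] at htend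
      exact ge_of_tendsto' htend bound
    have step2 : ∀ m : ℕ, P {ω | ε ≤ a ω - W ω * b ω} ≤ P {ω | ε * (m + 1) ≤ W ω} := by
      intro m
      have hδ : (0:ℝ) < 1 / (m + 1) := by positivity
      have h := step1 _ hδ
      have : {ω | ε / (1 / (m + 1 : ℝ)) ≤ W ω} = {ω | ε * (m + 1) ≤ W ω} := by
        ext ω; simp only [Set.mem_setOf_eq]
        rw [div_div_eq_mul_div, div_one]
      rwa [this] at h
    have hmeasW : ∀ m : ℕ, MeasurableSet {ω | ε * (m + 1) ≤ W ω} :=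
      fun m => measurableSet_le measurable_const W.stronglyMeasurable.measurable
    have hanti : Antitone (fun m : ℕ => {ω | ε * (m + 1) ≤ W ω}) := by
      intro m m' hmm ω hω
      simp only [Set.mem_setOf_eq] at hω ⊢
      have hcast : (m : ℝ) ≤ m' := Nat.cast_le.2 hmm
      nlinarith
    have hiInter : (⋂ m : ℕ, {ω | ε * (m + 1) ≤ W ω}) = ∅ := by
      ext ω
      simp only [Set.mem_iInter, Set.mem_setOf_eq, Set.mem_empty_iff_false, iff_false, not_forall,
        not_le]
      obtain ⟨m, hm⟩ := exists_nat_gt (W ω / ε)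
      refine ⟨m, ?_⟩
      rw [div_lt_iff₀ hε] at hm
      nlinarith
    have htend := tendsto_measure_iInter_atTop
      (fun m => (hmeasW m).nullMeasurableSet) hanti ⟨0, measure_ne_top P _⟩
    rw [hiInter, measure_empty] at htend
    have hle := ge_of_tendsto' htend step2
    exact le_antisymm hle zero_le
  rw [← AEEqFun.coeFn_le]
  have hae : ∀ᵐ ω ∂P, a ω ≤ W ω * b ω := by
    rw [MeasureTheory.ae_iff]
    refine le_antisymm ?_ zero_le
    have hsub : {ω | ¬ a ω ≤ W ω * b ω} ⊆
        ⋃ k : ℕ, {ω | 1 / ((k : ℝ) + 1) ≤ a ω - W ω * b ω} := by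
      intro ω hω
      simp only [Set.mem_setOf_eq, not_le] at hω
      obtain ⟨k, hk⟩ := exists_nat_one_div_lt (sub_pos.2 hω)
      exact Set.mem_iUnion.2 ⟨k, hk.le⟩
    calc P {ω | ¬ a ω ≤ W ω * b ω}
        ≤ P (⋃ k : ℕ, {ω | 1 / ((k : ℝ) + 1) ≤ a ω - W ω * b ω}) := measure_mono hsub
      _ = 0 := measure_iUnion_null fun k => main _ (by positivity)
  filter_upwards [hae, AEEqFun.coeFn_mul W b] with ω h1 h2
  rw [h2]
  exact h1

end Part3
section Part4
variable {Ω : Type*} [MeasurableSpace Ω] {P : Measure Ω} {X : Type*} [AddCommGroup X]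

namespace RNModuleStr

/-- The key inequality: `‖C A_s z‖ ≤ η · ‖A_{s/(n+1)} z‖` pointwise a.e.,
for any a.s. bound `η` of `{V(t) : t ∈ [0,s]}`. -/
lemma key (M : RNModuleStr P X) {V : ℝ → X → X} {C : X → X}
    (hV : IsCSemigroup M V C) (z : X) {s : ℝ} (hs : 0 < s) {η : Ω →ₘ[P] ℝ}
    (hb : ∀ t ∈ Icc (0:ℝ) s, ∀ x : X, M.nrm (V t x) ≤ η * M.nrm x) (n : ℕ) :
    ∀ᵐ ω ∂P, M.nrm (C (M.rsmul s⁻¹ (V s z - C z))) ω ≤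
      η ω * M.nrm (M.rsmul (s / (n+1 : ℕ))⁻¹ (V (s / (n+1 : ℕ)) z - C z)) ω := by
  set m : ℕ := n + 1 with hm_def
  have hmpos : 0 < m := Nat.succ_pos n
  have hmR : (0:ℝ) < m := by exact_mod_cast hmpos
  set h : ℝ := s / m with hh_def
  have hh : 0 < h := div_pos hs hmR
  set w : X := V h z - C z with hw_def
  have e0 : C (M.rsmul s⁻¹ (V s z - C z)) = M.rsmul s⁻¹ (C (V s z - C z)) :=
    hV.C_hom.2 _ _
  have tele := M.telescope hV z hs m hmpos
  have en : M.nrm (M.rsmul s⁻¹ (C (V s z - C z)))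
      = |(AEEqFun.const Ω s⁻¹ : Ω →ₘ[P] ℝ)| * M.nrm (C (V s z - C z)) :=
    M.nrm_smul _ _
  have en2 : M.nrm (M.rsmul h⁻¹ w)
      = |(AEEqFun.const Ω h⁻¹ : Ω →ₘ[P] ℝ)| * M.nrm w := M.nrm_smul _ _
  have hsum := M.nrm_sum_ae (fun i => V ((i : ℝ) * h) w) m
  have hbi : ∀ᵐ ω ∂P, ∀ i : ℕ, i < m →
      M.nrm (V ((i : ℝ) * h) w) ω ≤ η ω * M.nrm w ω := by
    rw [MeasureTheory.ae_all_iff]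
    intro i
    by_cases him : i < m
    · have hiR : (i : ℝ) ≤ m := by exact_mod_cast him.le
      have ht : (i : ℝ) * h ∈ Icc (0:ℝ) s := by
        constructor
        · exact mul_nonneg (Nat.cast_nonneg i) hh.le
        · have : (i : ℝ) * h ≤ (m : ℝ) * h := mul_le_mul_of_nonneg_right hiR hh.le
          have hmh : (m : ℝ) * h = s := by rw [hh_def]; field_simp
          rw [hmh] at this; exact this
      filter_upwards [AEEqFun.coeFn_le.2 (hb _ ht w), AEEqFun.coeFn_mul η (M.nrm w)]
        with ω e1 e2
      intro _
      rw [e2] at e1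
      exact e1
    · filter_upwards with ω hcon
      exact absurd hcon him
  rw [e0, en]
  filter_upwards [hsum, hbi, AEEqFun.coeFn_mul (|(AEEqFun.const Ω s⁻¹ : Ω →ₘ[P] ℝ)|)
      (M.nrm (C (V s z - C z))),
    AEEqFun.coeFn_abs (AEEqFun.const Ω s⁻¹ : Ω →ₘ[P] ℝ),
    AEEqFun.coeFn_const Ω (s⁻¹ : ℝ) (μ := P),
    AEEqFun.coeFn_mul (|(AEEqFun.const Ω h⁻¹ : Ω →ₘ[P] ℝ)|) (M.nrm w),
    AEEqFun.coeFn_abs (AEEqFun.const Ω h⁻¹ : Ω →ₘ[P] ℝ),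
    AEEqFun.coeFn_const Ω (h⁻¹ : ℝ) (μ := P)]
    with ω f1 f2 f3 f4 f5 f6 f7 f8
  rw [f3]
  simp only [Pi.mul_apply]
  rw [f4, f5]
  -- rewrite the RHS norm using en2
  have hRHS : M.nrm (M.rsmul h⁻¹ w) ω = h⁻¹ * M.nrm w ω := by
    rw [en2, f6]
    simp only [Pi.mul_apply]
    rw [f7, f8]
    simp only [Function.const_apply]
    rw [abs_of_pos (inv_pos.2 hh)]
  have goal2 : |s⁻¹| * M.nrm (C (V s z - C z)) ω ≤ η ω * (h⁻¹ * M.nrm w ω) := by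
    rw [abs_of_pos (inv_pos.2 hs), tele]
    have step1 : M.nrm (∑ i ∈ Finset.range m, V ((i : ℝ) * h) w) ω
        ≤ ∑ i ∈ Finset.range m, M.nrm (V ((i : ℝ) * h) w) ω := by
      have := f1
      simpa [hw_def, hh_def] using this
    have step2 : ∑ i ∈ Finset.range m, M.nrm (V ((i : ℝ) * h) w) ω
        ≤ ∑ i ∈ Finset.range m, η ω * M.nrm w ω := by
      apply Finset.sum_le_sum
      intro i hi
      exact f2 i (Finset.mem_range.1 hi)
    have step3 : (∑ i ∈ Finset.range m, η ω * M.nrm w ω) = (m : ℝ) * (η ω * M.nrm w ω) := by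
      rw [Finset.sum_const, Finset.card_range, nsmul_eq_mul]
    have hfinal : M.nrm (∑ i ∈ Finset.range m, V ((i : ℝ) * h) w) ω
        ≤ (m : ℝ) * (η ω * M.nrm w ω) := le_trans step1 (le_trans step2 step3.le)
    have harith : s⁻¹ * ((m : ℝ) * (η ω * M.nrm w ω)) = η ω * (h⁻¹ * M.nrm w ω) := by
      rw [hh_def]
      field_simp
    calc s⁻¹ * M.nrm (∑ i ∈ Finset.range m, V ((i : ℝ) * h) w) ω
        ≤ s⁻¹ * ((m : ℝ) * (η ω * M.nrm w ω)) := by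
          apply mul_le_mul_of_nonneg_left hfinal (inv_pos.2 hs).le
      _ = η ω * (h⁻¹ * M.nrm w ω) := harith
  rw [hRHS]
  simpa using goal2

end RNModuleStr
end Part4
section Part5
variable {Ω : Type*} [MeasurableSpace Ω] {P : Measure Ω} {X : Type*} [AddCommGroup X]

namespace RNModuleStr

/-- Core estimate: `‖C A_s z‖ ≤ η ‖C A z‖` whenever `η ≥ 0` a.s. bounds
`{V(t) : t ∈ [0,s]}`. -/
lemma core [IsProbabilityMeasure P] (M : RNModuleStr P X) {V : ℝ → X → X} {C : X → X}
    {DA : Set X} {A : X → X} (hV : IsCSemigroup M V C) (hA : IsGenerator M V C DA A)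
    {z : X} (hz : z ∈ DA) {s : ℝ} (hs : 0 < s) {η : Ω →ₘ[P] ℝ} (hη0 : 0 ≤ η)
    (hb : ∀ t ∈ Icc (0:ℝ) s, ∀ x : X, M.nrm (V t x) ≤ η * M.nrm x) :
    M.nrm (C (M.rsmul s⁻¹ (V s z - C z))) ≤ η * M.nrm (C (A z)) := by
  set y : ℕ → X := fun n => M.rsmul (s / (n+1 : ℕ))⁻¹ (V (s / (n+1 : ℕ)) z - C z) with hy_def
  apply le_mul_lim hη0 (r := fun n => M.nrm (y n - C (A z)))
  · -- the a.e. inequalities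
    intro n
    have k := M.key hV z hs hb n
    have htri : M.nrm (y n) ≤ M.nrm (C (A z)) + M.nrm (y n - C (A z)) := by
      have hyeq : y n = C (A z) + (y n - C (A z)) := by abel
      nth_rewrite 1 [hyeq]
      exact M.nrm_add_le _ _
    filter_upwards [k, AEEqFun.coeFn_le.2 htri,
      AEEqFun.coeFn_add (M.nrm (C (A z))) (M.nrm (y n - C (A z))), nonneg_ae hη0]
      with ω e1 e2 e3 e4
    have e2' : M.nrm (y n) ω ≤ M.nrm (C (A z)) ω + M.nrm (y n - C (A z)) ω := by
      rw [e3] at e2; exact e2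
    calc M.nrm (C (M.rsmul s⁻¹ (V s z - C z))) ω
        ≤ η ω * M.nrm (y n) ω := e1
      _ ≤ η ω * (M.nrm (C (A z)) ω + M.nrm (y n - C (A z)) ω) :=
          mul_le_mul_of_nonneg_left e2' e4
  · -- the limit in probability
    intro ε hε
    have hu : Tendsto (fun n : ℕ => s / (n+1 : ℕ)) atTop (nhdsWithin 0 (Ioi (0:ℝ))) := by
      rw [tendsto_nhdsWithin_iff]
      constructor
      · have h1 := tendsto_one_div_add_atTop_nhds_zero_nat (𝕜 := ℝ)
        have h2 := h1.const_mul s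
        rw [mul_zero] at h2
        convert h2 using 2 with n
        push_cast
        rw [mul_one_div]
      · filter_upwards with n
        have : (0:ℝ) < s / (n+1 : ℕ) := by positivity
        exact this
    exact (hA.spec z hz ε hε).comp hu

end RNModuleStr
end Part5
/-- for a locally a.s. bounded `C`-semigroup with generator
`(A,D(A))` and `z ∈ D(A)`: (i) for every `l > 0`, `⋁_{s∈(0,l]} ‖C A_s z‖ ∈ L⁰₊`
(the set is bounded above in `L⁰`); (ii) `‖C A_s z‖ ≤ (⋁_{t∈[0,2s]}‖V(t)‖)·‖CAz‖`
for every `s > 0`, where `A_s = (V(s) - C)/s`. -/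
theorem stmt5 {Ω : Type*} [MeasurableSpace Ω] (P : Measure Ω) [IsProbabilityMeasure P]
    {X : Type*} [AddCommGroup X] (M : RNModuleStr P X)
    (V : ℝ → X → X) (C : X → X) (DA : Set X) (A : X → X)
    (hV : IsCSemigroup M V C) (hloc : M.LocASBounded V)
    (hA : IsGenerator M V C DA A) (z : X) (hz : z ∈ DA) :
    (∀ l : ℝ, 0 < l → BddAbove {g : Ω →ₘ[P] ℝ | ∃ s ∈ Ioc (0:ℝ) l,
        g = M.nrm (C (M.rsmul s⁻¹ (V s z - C z)))}) ∧
    (∀ s : ℝ, 0 < s → ∀ (opN : ℝ → (Ω →ₘ[P] ℝ)) (W : Ω →ₘ[P] ℝ),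
      (∀ t ∈ Icc (0:ℝ) (2*s),
        IsGLB {η : Ω →ₘ[P] ℝ | 0 ≤ η ∧ ∀ x : X, M.nrm (V t x) ≤ η * M.nrm x} (opN t)) →
      IsLUB (opN '' Icc (0:ℝ) (2*s)) W →
      M.nrm (C (M.rsmul s⁻¹ (V s z - C z))) ≤ W * M.nrm (C (A z))) := by
  constructor
  · -- part (i)
    intro l hl
    obtain ⟨η, hη0, hηb⟩ := hloc l hl
    refine ⟨η * M.nrm (C (A z)), ?_⟩
    rintro g ⟨s, ⟨hs0, hsl⟩, rfl⟩
    exact M.core hV hA hz hs0 hη0 fun t ht x => hηb t ⟨ht.1, ht.2.trans hsl⟩ x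
  · -- part (ii)
    intro s hs opN W hopN hW
    have h2s : (0:ℝ) < 2 * s := by linarith
    have h0mem : (0:ℝ) ∈ Icc (0:ℝ) (2*s) := ⟨le_refl _, h2s.le⟩
    have hSne : ∀ t, 0 ≤ t →
        ({η : Ω →ₘ[P] ℝ | 0 ≤ η ∧ ∀ x : X, M.nrm (V t x) ≤ η * M.nrm x}).Nonempty := by
      intro t ht
      obtain ⟨η, hη0, hηb⟩ := hV.V_bdd t ht
      exact ⟨η, hη0, hηb⟩
    have opN_bd : ∀ t ∈ Icc (0:ℝ) (2*s), ∀ x : X,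
        M.nrm (V t x) ≤ opN t * M.nrm x := by
      intro t ht x
      exact glb_mul (M.nrm_nonneg x) (fun η hη => hη.1) (fun η hη => hη.2 x)
        (hSne t ht.1) (hopN t ht)
    have opN_le_W : ∀ t ∈ Icc (0:ℝ) (2*s), opN t ≤ W := fun t ht => hW.1 ⟨t, ht, rfl⟩
    have hW0 : 0 ≤ W := by
      have h1 : 0 ≤ opN 0 := (hopN 0 h0mem).2 fun η hη => hη.1
      exact le_trans h1 (opN_le_W 0 h0mem)
    have hb : ∀ t ∈ Icc (0:ℝ) s, ∀ x : X, M.nrm (V t x) ≤ W * M.nrm x := by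
      intro t ht x
      have ht2 : t ∈ Icc (0:ℝ) (2*s) := ⟨ht.1, by linarith [ht.2]⟩
      rw [← AEEqFun.coeFn_le]
      filter_upwards [AEEqFun.coeFn_le.2 (opN_bd t ht2 x),
        AEEqFun.coeFn_le.2 (opN_le_W t ht2), nonneg_ae (M.nrm_nonneg x),
        AEEqFun.coeFn_mul (opN t) (M.nrm x), AEEqFun.coeFn_mul W (M.nrm x)]
        with ω e1 e2 e3 e4 e5
      rw [e4] at e1
      rw [e5]
      simp only [Pi.mul_apply] at e1 ⊢
      exact le_trans e1 (mul_le_mul_of_nonneg_right e2 e3)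
    exact M.core hV hA hz hs hW0 hb
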